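/- For any distinct real exponents α₁ < ⋯ < α_n and points 0 < x₁ < ⋯ < x_n, the (n+1)×(n+1) matrix whose first n rows are (x_j^{α_i})_{j=1}^{n} extended by a column of the values at 0 (which are 0), and last row all ones, is nonsingular; equivalently, the functions x^{α₁},…,x^{α_n} and the constant 1 are linearly independent on [0,R) for any R > 0. -/

import Mathlib

open scoped ENNReal NNReal

/-- The power function `x ↦ x^a` on `[0,∞)`, with the convention `0^a := 0`. -/
noncomputable def pow0 (a x : ℝ) : ℝ := if x = 0 then 0 else x ^ a

/-- Generalized Vandermonde nonsingularity: for `α₁ < ⋯ < α_n` and `0 < x₁ < ⋯ < x_n`,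
the `(n+1)×(n+1)` matrix with rows `(x_j^{α_i})` extended by the column of values at `0`
(which are `0`) and a last row of ones, is nonsingular; equivalently the functions
`x^{α_i}` together with the constant `1` are linearly independent on `[0,R)`. -/
lemma key : ∀ (n : ℕ) (β : Fin n → ℝ), StrictMono β →
    ∀ (c x : Fin n → ℝ), StrictMono x → (∀ j, 0 < x j) →
    (∀ j, ∑ i, c i * (x j) ^ (β i) = 0) → ∀ i, c i = 0 := by
  intro n
  induction n with
  | zero => intro β _ c x _ _ _ i; exact i.elim0
  | succ n ih =>
    intro β hβ c x hx hxpos hsum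
    set g : ℝ → ℝ := fun t => ∑ i, c i * t ^ (β i - β 0) with hg
    have hgx : ∀ j, g (x j) = 0 := by
      intro j
      have h0 : (x j) ^ (β 0) ≠ 0 := (Real.rpow_pos_of_pos (hxpos j) _).ne'
      have h1 : (x j) ^ (β 0) * g (x j) = 0 := by
        rw [hg]
        simp only [Finset.mul_sum]
        rw [← hsum j]
        refine Finset.sum_congr rfl fun i _ => ?_
        rw [mul_left_comm, ← Real.rpow_add (hxpos j)]
        norm_num
      exact (mul_eq_zero.mp h1).resolve_left h0
    have hder : ∀ t : ℝ, 0 < t →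
        HasDerivAt g (∑ i, c i * ((β i - β 0) * t ^ (β i - β 0 - 1))) t := by
      intro t ht
      exact HasDerivAt.fun_sum fun i _ =>
        (Real.hasDerivAt_rpow_const (Or.inl ht.ne')).const_mul (c i)
    have hy : ∀ j : Fin n, ∃ y ∈ Set.Ioo (x j.castSucc) (x j.succ),
        ∑ i, c i * ((β i - β 0) * y ^ (β i - β 0 - 1)) = 0 := by
      intro j
      have hlt : x j.castSucc < x j.succ := hx (Fin.castSucc_lt_succ : j.castSucc < j.succ)
      refine exists_hasDerivAt_eq_zero (f := g)
        (f' := fun t => ∑ i, c i * ((β i - β 0) * t ^ (β i - β 0 - 1)))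
        hlt ?_ (by rw [hgx, hgx]) ?_
      · intro t ht
        exact ((hder t (lt_of_lt_of_le (hxpos _) ht.1)).continuousAt).continuousWithinAt
      · intro t ht
        exact hder t (lt_trans (hxpos _) ht.1)
    choose y hy1 hy2 using hy
    have hypos : ∀ j, 0 < y j := fun j => lt_trans (hxpos _) (hy1 j).1
    have hymono : StrictMono y := by
      intro j k hjk
      have h1 : x j.succ ≤ x k.castSucc := by
        apply hx.monotone
        rw [Fin.lt_def] at hjk
        rw [Fin.le_def]
        simp only [Fin.val_succ, Fin.coe_castSucc]
        omega
      exact lt_of_lt_of_le (hy1 j).2 (le_trans h1 (le_of_lt (hy1 k).1))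
    have hc' : ∀ i : Fin n, c i.succ * (β i.succ - β 0) = 0 := by
      apply ih (fun i => β i.succ - β 0 - 1)
        (fun i k hik => by
          have := hβ (Fin.succ_lt_succ_iff.mpr hik)
          show β i.succ - β 0 - 1 < β k.succ - β 0 - 1
          linarith)
        _ y hymono hypos
      intro j
      have := hy2 j
      rw [Fin.sum_univ_succ] at this
      simp only [sub_self, zero_mul, mul_zero, zero_add] at this
      rw [← this]
      exact Finset.sum_congr rfl fun i _ => by ring
    have hcs : ∀ i : Fin n, c i.succ = 0 := by
      intro i
      have hne : β i.succ - β 0 ≠ 0 := by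
        have := hβ (Fin.succ_pos i)
        linarith
      exact (mul_eq_zero.mp (hc' i)).resolve_right hne
    have hc0 : c 0 = 0 := by
      have := hsum 0
      rw [Fin.sum_univ_succ] at this
      simp only [hcs, zero_mul, Finset.sum_const_zero, add_zero] at this
      have h0 : (x 0) ^ (β 0) ≠ 0 := (Real.rpow_pos_of_pos (hxpos 0) _).ne'
      exact (mul_eq_zero.mp this).resolve_right h0
    intro i
    rcases Fin.eq_zero_or_eq_succ i with h | ⟨i', rfl⟩
    · rw [h]; exact hc0
    · exact hcs i'


theorem stmt15 (n : ℕ) (α : Fin n → ℝ) (hα : StrictMono α) :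
    (∀ x : Fin n → ℝ, StrictMono x → (∀ j, 0 < x j) →
      (Matrix.of fun i j : Fin (n + 1) =>
        if hi : (i : ℕ) < n then
          (if hj : (j : ℕ) < n then pow0 (α ⟨i, hi⟩) (x ⟨j, hj⟩) else 0)
        else 1).det ≠ 0) ∧
    (∀ R : ℝ≥0∞, 0 < R →
      LinearIndependent ℝ
        (Sum.elim
          (fun i (t : {t : ℝ // 0 ≤ t ∧ (Real.nnabs t : ℝ≥0∞) < R}) => pow0 (α i) t.1)
          (fun (_ : Unit) (_ : {t : ℝ // 0 ≤ t ∧ (Real.nnabs t : ℝ≥0∞) < R}) =>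
            (1 : ℝ)))) := by
  constructor
  · intro x hx hxpos hdet
    set M : Matrix (Fin (n+1)) (Fin (n+1)) ℝ := Matrix.of fun i j : Fin (n + 1) =>
        if hi : (i : ℕ) < n then
          (if hj : (j : ℕ) < n then pow0 (α ⟨i, hi⟩) (x ⟨j, hj⟩) else 0)
        else 1 with hM
    obtain ⟨v, hv, hvM⟩ := (Matrix.exists_vecMul_eq_zero_iff).2 hdet
    -- last entry of v is 0
    have hvlast : v (Fin.last n) = 0 := by
      have := congrFun hvM (Fin.last n)
      simp only [Matrix.vecMul, dotProduct, hM, Matrix.of_apply,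
        Fin.val_last, lt_irrefl, dif_neg, Pi.zero_apply] at this
      rw [Fin.sum_univ_castSucc] at this
      simp only [Fin.coe_castSucc, Fin.is_lt, dif_pos, Fin.val_last,
        lt_irrefl, dif_neg, mul_zero, mul_one, Finset.sum_const_zero, zero_add,
        not_lt, le_refl] at this
      simpa using this
    have hzero : ∀ i : Fin n, v i.castSucc = 0 := by
      apply key n α hα _ x hx hxpos
      intro j
      have := congrFun hvM (Fin.castSucc j)
      simp only [Matrix.vecMul, dotProduct, hM, Matrix.of_apply,
        Pi.zero_apply] at this
      rw [Fin.sum_univ_castSucc] at this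
      simp only [Fin.coe_castSucc, Fin.is_lt, dif_pos, Fin.val_last,
        lt_irrefl, dif_neg, not_lt, le_refl, hvlast, zero_mul, add_zero] at this
      rw [← this]
      refine Finset.sum_congr rfl fun i _ => ?_
      congr 1
      rw [pow0, if_neg (hxpos j).ne']
    apply hv
    funext i
    rcases Fin.eq_castSucc_or_eq_last i with ⟨i', rfl⟩ | rfl
    · exact hzero i'
    · exact hvlast
  · intro R hR
    rw [Fintype.linearIndependent_iff]
    intro g hg
    -- get a positive real ε with ofReal ε < R
    obtain ⟨c0, hc0, hc0R⟩ := exists_between hR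
    have hc0top : c0 ≠ ⊤ := fun h => not_top_lt (h ▸ hc0R)
    set ε : ℝ := c0.toReal with hε
    have hεpos : 0 < ε := ENNReal.toReal_pos hc0.ne' hc0top
    have hεR : ENNReal.ofReal ε < R := by
      rw [hε, ENNReal.ofReal_toReal hc0top]; exact hc0R
    -- membership lemma
    have hmem : ∀ t : ℝ, 0 ≤ t → t < ε → (0 ≤ t ∧ (Real.nnabs t : ℝ≥0∞) < R) := by
      intro t ht htε
      refine ⟨ht, ?_⟩
      have : (Real.nnabs t : ℝ≥0∞) = ENNReal.ofReal t := by
        rw [Real.nnabs_of_nonneg ht, ENNReal.ofReal]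
      rw [this]
      exact lt_of_le_of_lt (ENNReal.ofReal_le_ofReal htε.le) hεR
    -- evaluate at 0
    have h0mem : (0:ℝ) ≤ 0 ∧ (Real.nnabs (0:ℝ) : ℝ≥0∞) < R := hmem 0 le_rfl hεpos
    have hg0 := congrFun hg ⟨0, h0mem⟩
    rw [Fintype.sum_sum_type] at hg0
    simp only [Sum.elim_inl, Sum.elim_inr, Pi.smul_apply, Pi.zero_apply,
      smul_eq_mul, Pi.add_apply, Finset.sum_apply, pow0, if_pos rfl,
      mul_zero, Finset.sum_const_zero, mul_one, zero_add, if_true,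
      Finset.univ_unique, Finset.sum_singleton] at hg0
    -- hg0 : g (Sum.inr ()) = 0  (hopefully)
    -- points
    set pts : Fin n → ℝ := fun j => ε * ((j : ℝ) + 1) / (n + 1) with hpts
    have hptspos : ∀ j, 0 < pts j := by
      intro j
      apply div_pos (mul_pos hεpos (by positivity))
      positivity
    have hptsmono : StrictMono pts := by
      intro j k hjk
      have hjk' : (j : ℝ) < (k : ℝ) := by exact_mod_cast hjk
      show ε * ((j : ℝ) + 1) / (n + 1) < ε * ((k : ℝ) + 1) / (n + 1)
      rw [div_lt_div_iff₀ (by positivity) (by positivity)]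
      nlinarith [mul_pos (mul_pos hεpos (show (0:ℝ) < (n:ℝ)+1 by positivity))
        (sub_pos.mpr hjk')]
    have hptslt : ∀ j, pts j < ε := by
      intro j
      rw [hpts, div_lt_iff₀ (by positivity)]
      have : (j : ℝ) + 1 < (n : ℝ) + 1 := by
        have := j.2; exact_mod_cast by exact_mod_cast Nat.succ_lt_succ this
      nlinarith
    have hkey : ∀ i : Fin n, g (Sum.inl i) = 0 := by
      apply key n α hα _ pts hptsmono hptspos
      intro j
      have hgj := congrFun hg ⟨pts j, hmem _ (hptspos j).le (hptslt j)⟩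
      rw [Fintype.sum_sum_type] at hgj
      simp only [Sum.elim_inl, Sum.elim_inr, Pi.smul_apply, smul_eq_mul,
        Pi.zero_apply, Finset.univ_unique, Finset.sum_singleton, mul_one,
        Finset.sum_apply, Pi.add_apply] at hgj
      have hrw : ∑ i : Fin n, g (Sum.inl i) * pow0 (α i) (pts j)
          = ∑ i : Fin n, g (Sum.inl i) * (pts j) ^ (α i) :=
        Finset.sum_congr rfl fun i _ => by rw [pow0, if_neg (hptspos j).ne']
      rw [← hrw]
      rw [hg0, add_zero] at hgj
      exact hgj
    intro i
    rcases i with i | u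
    · exact hkey i
    · cases u; exact hg0
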